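/- In a grid graph with all horizontal and vertical edges of cost 1 and diagonal edges of cost 0 or 1, if there is a path from (i,j) to (i',j') of cost ℓ (with i ≤ i', j ≤ j'), and a ≤ min(i'−i, j'−j), then there is a path from (i, j+a) to (i'−a, j') of cost at most ℓ + 2a, and similarly from (i+a, j) to (i', j'−a). -/

import Mathlib

variable {α : Type*}

/-- Costs for the Levenshtein edit distance (removed from Mathlib; restored with its old meaning). -/
structure Levenshtein.Cost (α β δ : Type*) where
  delete : α → δ
  insert : β → δ
  substitute : α → β → δ

/-- The default unit costs (restored from old Mathlib). -/
def Levenshtein.defaultCost [DecidableEq α] : Levenshtein.Cost α α ℕ where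
  delete _ := 1
  insert _ := 1
  substitute a b := if a = b then 0 else 1

/-- Auxiliary step of the Levenshtein algorithm (restored from old Mathlib). -/
def Levenshtein.impl {β δ : Type*} [Zero δ] [Min δ] [Add δ] (C : Levenshtein.Cost α β δ)
    (xs : List α) (y : β) (d : {r : List δ // 0 < r.length}) : {r : List δ // 0 < r.length} :=
  let ⟨ds, w⟩ := d
  xs.zip (ds.zip ds.tail) |>.foldr
    (init := ⟨[ds.getLast (List.length_pos_iff_ne_nil.mp w) + C.insert y], by simp⟩)
    (fun ⟨x, d₀, d₁⟩ ⟨r, w⟩ =>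
      ⟨min (C.delete x + r[0]) (min (C.insert y + d₀) (C.substitute x y + d₁)) :: r, by simp⟩)

/-- Levenshtein distances of all suffixes (restored from old Mathlib). -/
def suffixLevenshtein {β δ : Type*} [Zero δ] [Min δ] [Add δ] (C : Levenshtein.Cost α β δ)
    (xs : List α) (ys : List β) : {r : List δ // 0 < r.length} :=
  ys.foldr
    (Levenshtein.impl C xs)
    (xs.foldr (init := ⟨[0], by simp⟩) (fun a ⟨ds, w⟩ => ⟨(C.delete a + ds[0]) :: ds, by simp⟩))

/-- Levenshtein edit distance (restored from old Mathlib). -/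
def levenshtein {β δ : Type*} [Zero δ] [Min δ] [Add δ] (C : Levenshtein.Cost α β δ)
    (xs : List α) (ys : List β) : δ :=
  let ⟨r, w⟩ := suffixLevenshtein C xs ys
  r[0]

/-- Levenshtein edit distance with unit costs. -/
def edit [DecidableEq α] (u v : List α) : ℕ :=
  levenshtein Levenshtein.defaultCost u v

/-- `GridPath hcost dcost p q c` : there is a path from `p` to `q` in the grid
graph of total cost `c`, where the horizontal edge (i,j) → (i+1,j) costs
`hcost (i,j)`, each vertical edge (i,j) → (i,j+1) costs 1, and the diagonal
edge (i,j) → (i+1,j+1) costs `dcost (i,j)`. -/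
inductive GridPath (hcost dcost : ℕ × ℕ → ℕ) : ℕ × ℕ → ℕ × ℕ → ℕ → Prop
  | nil (p : ℕ × ℕ) : GridPath hcost dcost p p 0
  | horiz {q : ℕ × ℕ} {c : ℕ} (i j : ℕ) :
      GridPath hcost dcost (i + 1, j) q c → GridPath hcost dcost (i, j) q (hcost (i, j) + c)
  | vert {q : ℕ × ℕ} {c : ℕ} (i j : ℕ) :
      GridPath hcost dcost (i, j + 1) q c → GridPath hcost dcost (i, j) q (1 + c)
  | diag {q : ℕ × ℕ} {c : ℕ} (i j : ℕ) :
      GridPath hcost dcost (i + 1, j + 1) q c → GridPath hcost dcost (i, j) q (dcost (i, j) + c)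

section Aux

theorem gp_mono {h d : ℕ × ℕ → ℕ} {p q : ℕ × ℕ} {c : ℕ}
    (hp : GridPath h d p q c) : p.1 ≤ q.1 ∧ p.2 ≤ q.2 := by
  induction hp with
  | nil p => exact ⟨le_refl _, le_refl _⟩
  | horiz i j h ih => simp only at ih ⊢; omega
  | vert i j h ih => simp only at ih ⊢; omega
  | diag i j h ih => simp only at ih ⊢; omega

theorem gp_count {d : ℕ × ℕ → ℕ} {p q : ℕ × ℕ} {c : ℕ}
    (hp : GridPath (fun _ => 1) d p q c) :
    q.2 + p.1 ≤ c + q.1 + p.2 ∧ q.1 + p.2 ≤ c + q.2 + p.1 := by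
  induction hp with
  | nil p => omega
  | horiz i j h ih => simp only at ih ⊢; omega
  | vert i j h ih => simp only at ih ⊢; omega
  | diag i j h ih => simp only at ih ⊢; omega

theorem gp_vpath (h d : ℕ × ℕ → ℕ) (i : ℕ) : ∀ n j, GridPath h d (i, j) (i, j + n) n := by
  intro n
  induction n with
  | zero => intro j; exact GridPath.nil _
  | succ n ih =>
      intro j
      have t := GridPath.vert (hcost := h) (dcost := d) i j (ih (j + 1))
      have h1 : j + 1 + n = j + (n + 1) := by omega
      have h2 : 1 + n = n + 1 := by omega
      rw [h1, h2] at t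
      exact t

theorem gp_hpath (d : ℕ × ℕ → ℕ) (j : ℕ) :
    ∀ n i, GridPath (fun _ => 1) d (i, j) (i + n, j) n := by
  intro n
  induction n with
  | zero => intro i; exact GridPath.nil _
  | succ n ih =>
      intro i
      have t := GridPath.horiz (hcost := fun _ => 1) (dcost := d) i j (ih (i + 1))
      have h1 : i + 1 + n = i + (n + 1) := by omega
      have h2 : (fun _ : ℕ × ℕ => 1) (i, j) + n = n + 1 := by simp; omega
      rw [h1, h2] at t
      exact t

theorem gp_shift {d : ℕ × ℕ → ℕ} {p q : ℕ × ℕ} {ℓ : ℕ}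
    (hp : GridPath (fun _ => 1) d p q ℓ) :
    ∀ a b : ℕ, p.2 + a ≤ q.2 → p.1 + b ≤ q.1 →
      ∃ c ≤ ℓ + a + b, GridPath (fun _ => 1) d (p.1, p.2 + a) (q.1 - b, q.2) c := by
  induction hp with
  | nil p =>
      intro a b h1 h2
      have ha : a = 0 := by omega
      have hb : b = 0 := by omega
      subst ha; subst hb
      exact ⟨0, by omega, GridPath.nil _⟩
  | horiz i j h ih =>
      rename_i q c
      intro a b h1 h2
      simp only at h1 h2 ih ⊢
      by_cases hb : i + 1 + b ≤ q.1
      · obtain ⟨c', hc', hpath⟩ := ih a b h1 hb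
        exact ⟨1 + c', by omega, GridPath.horiz i (j + a) hpath⟩
      · -- q.1 = i + b : take a vertical path
        have hcnt := gp_count h
        simp only at hcnt
        refine ⟨q.2 - (j + a), by omega, ?_⟩
        have t := gp_vpath (fun _ => 1) d i (q.2 - (j + a)) (j + a)
        have he : j + a + (q.2 - (j + a)) = q.2 := by omega
        have he2 : q.1 - b = i := by omega
        rw [he] at t
        rw [he2]
        exact t
  | vert i j h ih =>
      rename_i q c
      intro a b h1 h2
      simp only at h1 h2 ih ⊢
      by_cases ha : j + 1 + a ≤ q.2
      · obtain ⟨c', hc', hpath⟩ := ih a b ha h2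
        have he : j + 1 + a = (j + a) + 1 := by omega
        rw [he] at hpath
        exact ⟨1 + c', by omega, GridPath.vert i (j + a) hpath⟩
      · -- j + a = q.2 : take a horizontal path
        have hcnt := gp_count h
        simp only at hcnt
        refine ⟨q.1 - b - i, by omega, ?_⟩
        have t := gp_hpath d (j + a) (q.1 - b - i) i
        have he : i + (q.1 - b - i) = q.1 - b := by omega
        have he2 : j + a = q.2 := by omega
        rw [he] at t
        rw [he2] at t
        rw [he2]
        exact t
  | diag i j h ih =>
      rename_i q c
      intro a b h1 h2
      simp only at h1 h2 ih ⊢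
      by_cases hb : i + 1 + b ≤ q.1
      · by_cases ha1 : 1 ≤ a
        · obtain ⟨c', hc', hpath⟩ := ih (a - 1) b (by omega) hb
          have he : j + 1 + (a - 1) = j + a := by omega
          rw [he] at hpath
          refine ⟨1 + c', by omega, GridPath.horiz i (j + a) hpath⟩
        · have ha0 : a = 0 := by omega
          subst ha0
          have hm := gp_mono h
          simp only at hm
          obtain ⟨c', hc', hpath⟩ := ih 0 b (by omega) hb
          refine ⟨d (i, j) + c', by omega, GridPath.diag i j hpath⟩
      · -- q.1 = i + b : take a vertical path
        have hcnt := gp_count h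
        simp only at hcnt
        refine ⟨q.2 - (j + a), by omega, ?_⟩
        have t := gp_vpath (fun _ => 1) d i (q.2 - (j + a)) (j + a)
        have he : j + a + (q.2 - (j + a)) = q.2 := by omega
        have he2 : q.1 - b = i := by omega
        rw [he] at t
        rw [he2]
        exact t

theorem gp_swap {d : ℕ × ℕ → ℕ} {p q : ℕ × ℕ} {c : ℕ}
    (hp : GridPath (fun _ => 1) d p q c) :
    GridPath (fun _ => 1) (fun r => d (r.2, r.1)) (p.2, p.1) (q.2, q.1) c := by
  induction hp with
  | nil p => exact GridPath.nil _
  | horiz i j h ih => exact GridPath.vert j i ih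
  | vert i j h ih => exact GridPath.horiz j i ih
  | diag i j h ih => exact GridPath.diag j i ih

end Aux

/-- Shifting the endpoints of a path within a grid graph costs at most 2a
extra: from a path (i,j) → (i',j') of cost ℓ one gets paths
(i, j+a) → (i'-a, j') and (i+a, j) → (i', j'-a) of cost at most ℓ + 2a. -/
theorem stmt_18 (dcost : ℕ × ℕ → ℕ) (hd : ∀ p, dcost p ≤ 1)
    (i j i' j' ℓ a : ℕ) (hi : i ≤ i') (hj : j ≤ j')
    (ha : a ≤ min (i' - i) (j' - j))
    (h : GridPath (fun _ => 1) dcost (i, j) (i', j') ℓ) :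
    (∃ c ≤ ℓ + 2 * a, GridPath (fun _ => 1) dcost (i, j + a) (i' - a, j') c) ∧
      (∃ c ≤ ℓ + 2 * a, GridPath (fun _ => 1) dcost (i + a, j) (i', j' - a) c) := by
  constructor
  · obtain ⟨c, hc, hp⟩ := gp_shift h a a (show j + a ≤ j' by omega) (show i + a ≤ i' by omega)
    exact ⟨c, by omega, hp⟩
  · have hs := gp_swap h
    obtain ⟨c, hc, hp⟩ := gp_shift hs a a (show i + a ≤ i' by omega) (show j + a ≤ j' by omega)
    have t := gp_swap hp
    exact ⟨c, by omega, t⟩
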